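/- Let K be a field and (u_k)_{k≥0} a sequence in K satisfying a linear recurrence of order d with monic characteristic polynomial P, where d is minimal (no nonzero polynomial of degree < d annihilates the sequence). Then the Hankel determinant det(u_{i+j-2})_{1≤i,j≤d} is nonzero. -/
import Mathlib


/-- If a sequence satisfies a monic linear recurrence of order `d`
and no nonzero vector of length `d` gives a linear relation among shifted windows
of the sequence (minimality of the order), then the `d × d` Hankel matrix
`(u_{d+i-j-1})` has nonzero determinant. -/
theorem hankel_det_ne_zero_of_minimal_recurrence
    (K : Type*) [Field K] (d : ℕ) (hd : 0 < d)
    (u : ℕ → K) (a : Fin d → K)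
    (hrec : ∀ k : ℕ, u (k + d) + ∑ i : Fin d, a i * u (k + (d - 1 - i.val)) = 0)
    (hmin : ∀ b : Fin d → K, b ≠ 0 →
      ∃ k : ℕ, ∑ i : Fin d, b i * u (k + (d - 1 - i.val)) ≠ 0) :
    (Matrix.of fun i j : Fin d => u (d + i.val - j.val - 1)).det ≠ 0 := by
  intro hdet
  obtain ⟨b, hb0, hbk⟩ := (Matrix.exists_mulVec_eq_zero_iff).2 hdet
  -- the window sum
  set S : ℕ → K := fun k => ∑ j : Fin d, b j * u (k + (d - 1 - j.val)) with hS
  have hSlow : ∀ k : ℕ, k < d → S k = 0 := by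
    intro k hk
    have := congrFun hbk ⟨k, hk⟩
    simpa [Matrix.mulVec, dotProduct, hS, mul_comm,
      show ∀ j : Fin d, d + k - j.val - 1 = k + (d - 1 - j.val) from
        fun j => by omega] using this
  have hSall : ∀ k : ℕ, S k = 0 := by
    intro k
    induction k using Nat.strong_induction_on with
    | _ k ih =>
      by_cases hk : k < d
      · exact hSlow k hk
      · push_neg at hk
        obtain ⟨m, rfl⟩ : ∃ m, k = m + d := ⟨k - d, by omega⟩
        have hrecs : ∀ n : ℕ, u (n + d) = -∑ i : Fin d, a i * u (n + (d - 1 - i.val)) := by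
          intro n
          have := hrec n
          linear_combination this
        have : S (m + d) = -∑ i : Fin d, a i * S (m + (d - 1 - i.val)) := by
          simp only [hS]
          have : ∀ j : Fin d, u (m + d + (d - 1 - j.val))
              = -∑ i : Fin d, a i * u (m + (d - 1 - j.val) + (d - 1 - i.val)) := by
            intro j
            have := hrecs (m + (d - 1 - j.val))
            rw [show m + (d - 1 - j.val) + d = m + d + (d - 1 - j.val) from by ring] at this
            exact this
          rw [Finset.sum_congr rfl (fun j _ => by rw [this j])]
          simp only [mul_neg, Finset.mul_sum, ← Finset.sum_neg_distrib]
          rw [Finset.sum_comm]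
          refine Finset.sum_congr rfl fun i _ => Finset.sum_congr rfl fun j _ => ?_
          rw [show m + (d - 1 - j.val) + (d - 1 - i.val)
              = m + (d - 1 - i.val) + (d - 1 - j.val) from by ring]
          ring
        rw [this]
        have : ∀ i : Fin d, S (m + (d - 1 - i.val)) = 0 := fun i => ih _ (by omega)
        simp [this]
  obtain ⟨k, hk⟩ := hmin b hb0
  exact hk (hSall k)
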